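/- Let T, σ > 0, μ > ρ, and let φ_T be the density of N(0,T). Among all measurable f : ℝ → [0,1], the functional F(f) = exp(ρT) + ∫_ℝ φ_T(x) f(x) (exp((μ − σ²/2)T + σx) − exp(ρT)) dx is maximized by f* = indicator of {x : x > (T/σ)(ρ − μ + σ²/2)}, i.e., F(f) ≤ F(f*) for all such f. -/

import Mathlib

open Real MeasureTheory

lemma aux_int (T b : ℝ) (hT : 0 < T) :
    Integrable (fun x : ℝ => Real.exp (-x ^ 2 / (2 * T)) * Real.exp (b * x)) := by
  have h : ∀ x : ℝ, Real.exp (-x ^ 2 / (2 * T)) * Real.exp (b * x)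
      = Real.exp (b ^ 2 * T / 2) * Real.exp (-(1/(2*T)) * (x - b*T) ^ 2) := by
    intro x
    rw [← Real.exp_add, ← Real.exp_add]
    congr 1
    field_simp
    ring
  simp_rw [h]
  exact ((integrable_exp_neg_mul_sq (by positivity : (0:ℝ) < 1/(2*T))).comp_sub_right
    (b*T)).const_mul _

lemma aux_int2 (T s A C K : ℝ) (hT : 0 < T) (hK : 0 ≤ K) (h : ℝ → ℝ) (hm : Measurable h)
    (h0 : ∀ x, 0 ≤ h x) (h1 : ∀ x, h x ≤ 1) :
    Integrable (fun x : ℝ => K * Real.exp (-x ^ 2 / (2 * T)) * h x *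
      (Real.exp (A + s * x) - Real.exp C)) := by
  have hG : Integrable (fun x : ℝ => K * Real.exp (-x ^ 2 / (2 * T)) *
      (Real.exp (A + s * x) + Real.exp C)) := by
    have e1 := ((aux_int T s hT).const_mul (K * Real.exp A))
    have e2 := ((aux_int T 0 hT).const_mul (K * Real.exp C))
    have := e1.add e2
    refine this.congr ?_
    filter_upwards with x
    simp [Real.exp_add, mul_comm, mul_assoc, mul_left_comm]
    ring
  refine hG.mono ?_ ?_
  · exact ((((measurable_const.mul (by fun_prop)).mul hm).mul (by fun_prop))).aestronglyMeasurable
  · filter_upwards with x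
    have hD : |Real.exp (A + s * x) - Real.exp C| ≤ Real.exp (A + s * x) + Real.exp C := by
      rw [abs_sub_le_iff]
      constructor <;> nlinarith [Real.exp_pos (A + s * x), Real.exp_pos C]
    have hE : (0:ℝ) ≤ K * Real.exp (-x ^ 2 / (2 * T)) := by positivity
    rw [Real.norm_eq_abs, Real.norm_eq_abs, abs_mul,
      abs_of_nonneg (mul_nonneg hE (h0 x)),
      abs_of_nonneg (by positivity : (0:ℝ) ≤ K * Real.exp (-x ^ 2 / (2 * T)) *
        (Real.exp (A + s*x) + Real.exp C))]
    calc K * Real.exp (-x ^ 2 / (2 * T)) * h x * |Real.exp (A + s * x) - Real.exp C|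
        ≤ K * Real.exp (-x ^ 2 / (2 * T)) * 1 * (Real.exp (A + s * x) + Real.exp C) := by
          apply mul_le_mul (by nlinarith [h1 x]) hD (abs_nonneg _) (by positivity)
      _ = K * Real.exp (-x ^ 2 / (2 * T)) * (Real.exp (A + s * x) + Real.exp C) := by ring

theorem stmt_4 (T σ ρ μ : ℝ) (hT : 0 < T) (hσ : 0 < σ) (hρμ : ρ < μ)
    (f : ℝ → ℝ) (hf : Measurable f) (hf0 : ∀ x, 0 ≤ f x) (hf1 : ∀ x, f x ≤ 1) :
    Real.exp (ρ * T) +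
      (∫ x : ℝ, (Real.sqrt (2 * Real.pi * T))⁻¹ * Real.exp (-x ^ 2 / (2 * T)) * f x *
        (Real.exp ((μ - σ ^ 2 / 2) * T + σ * x) - Real.exp (ρ * T))) ≤
    Real.exp (ρ * T) +
      ∫ x : ℝ, (Real.sqrt (2 * Real.pi * T))⁻¹ * Real.exp (-x ^ 2 / (2 * T)) *
        (if (T / σ) * (ρ - μ + σ ^ 2 / 2) < x then (1 : ℝ) else 0) *
        (Real.exp ((μ - σ ^ 2 / 2) * T + σ * x) - Real.exp (ρ * T)) := by
  have hK : (0:ℝ) ≤ (Real.sqrt (2 * Real.pi * T))⁻¹ := by positivity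
  have hgm : Measurable (fun x : ℝ => if (T / σ) * (ρ - μ + σ ^ 2 / 2) < x then (1:ℝ) else 0) :=
    Measurable.ite (measurableSet_lt measurable_const measurable_id)
      measurable_const measurable_const
  have hg0 : ∀ x : ℝ, (0:ℝ) ≤ if (T / σ) * (ρ - μ + σ ^ 2 / 2) < x then (1:ℝ) else 0 := by
    intro x; split <;> norm_num
  have hg1 : ∀ x : ℝ, (if (T / σ) * (ρ - μ + σ ^ 2 / 2) < x then (1:ℝ) else 0) ≤ 1 := by
    intro x; split <;> norm_num
  rw [add_le_add_iff_left]
  refine integral_mono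
    (aux_int2 T σ ((μ - σ ^ 2 / 2) * T) (ρ*T) _ hT hK f hf hf0 hf1)
    (aux_int2 T σ ((μ - σ ^ 2 / 2) * T) (ρ*T) _ hT hK _ hgm hg0 hg1) ?_
  intro x
  have hE : (0:ℝ) ≤ (Real.sqrt (2 * Real.pi * T))⁻¹ * Real.exp (-x ^ 2 / (2 * T)) := by
    positivity
  have hthr : (T / σ) * (ρ - μ + σ ^ 2 / 2) * σ = T * (ρ - μ + σ ^ 2 / 2) := by
    field_simp
  have key : f x * (Real.exp ((μ - σ ^ 2 / 2) * T + σ * x) - Real.exp (ρ * T)) ≤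
      (if (T / σ) * (ρ - μ + σ ^ 2 / 2) < x then (1:ℝ) else 0) *
        (Real.exp ((μ - σ ^ 2 / 2) * T + σ * x) - Real.exp (ρ * T)) := by
    by_cases h : (T / σ) * (ρ - μ + σ ^ 2 / 2) < x
    · have hle : ρ * T ≤ (μ - σ ^ 2 / 2) * T + σ * x := by
        nlinarith [mul_lt_mul_of_pos_right h hσ]
      have hD : 0 ≤ Real.exp ((μ - σ ^ 2 / 2) * T + σ * x) - Real.exp (ρ * T) := by
        nlinarith [Real.exp_le_exp.2 hle]
      rw [if_pos h]
      nlinarith [hf1 x]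
    · push_neg at h
      have hle : (μ - σ ^ 2 / 2) * T + σ * x ≤ ρ * T := by
        nlinarith [mul_le_mul_of_nonneg_right h hσ.le]
      have hD : Real.exp ((μ - σ ^ 2 / 2) * T + σ * x) - Real.exp (ρ * T) ≤ 0 := by
        nlinarith [Real.exp_le_exp.2 hle]
      rw [if_neg (not_lt.2 h)]
      nlinarith [hf0 x]
  calc (Real.sqrt (2 * Real.pi * T))⁻¹ * Real.exp (-x ^ 2 / (2 * T)) * f x *
        (Real.exp ((μ - σ ^ 2 / 2) * T + σ * x) - Real.exp (ρ * T))
      = (Real.sqrt (2 * Real.pi * T))⁻¹ * Real.exp (-x ^ 2 / (2 * T)) *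
        (f x * (Real.exp ((μ - σ ^ 2 / 2) * T + σ * x) - Real.exp (ρ * T))) := by ring
    _ ≤ (Real.sqrt (2 * Real.pi * T))⁻¹ * Real.exp (-x ^ 2 / (2 * T)) *
        ((if (T / σ) * (ρ - μ + σ ^ 2 / 2) < x then (1:ℝ) else 0) *
          (Real.exp ((μ - σ ^ 2 / 2) * T + σ * x) - Real.exp (ρ * T))) :=
        mul_le_mul_of_nonneg_left key hE
    _ = (Real.sqrt (2 * Real.pi * T))⁻¹ * Real.exp (-x ^ 2 / (2 * T)) *
        (if (T / σ) * (ρ - μ + σ ^ 2 / 2) < x then (1:ℝ) else 0) *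
        (Real.exp ((μ - σ ^ 2 / 2) * T + σ * x) - Real.exp (ρ * T)) := by ring
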